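/- For every real number a > 0, the spectral radius of the operator K_a = a·K satisfies r(K_a) ≥ a·τ₁. -/

import Mathlib

open MeasureTheory Set Filter

noncomputable def G (α t s : ℝ) : ℝ :=
  if s ≤ t then (t * (1 - s) ^ (α - 1) - (t - s) ^ (α - 1)) / Real.Gamma α
  else t * (1 - s) ^ (α - 1) / Real.Gamma α

noncomputable def Psi (α s : ℝ) : ℝ := (1 - s) ^ (α - 1) / Real.Gamma α

/-- Integral of `f` over `[0,1]` against the finite signed measure `ν`
(via its Jordan decomposition). -/
noncomputable def stInt (ν : MeasureTheory.SignedMeasure ℝ) (f : ℝ → ℝ) : ℝ :=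
  ∫ t in Icc (0:ℝ) 1, f t ∂ν.toJordanDecomposition.posPart
    - ∫ t in Icc (0:ℝ) 1, f t ∂ν.toJordanDecomposition.negPart

noncomputable def gA (α : ℝ) (ν : MeasureTheory.SignedMeasure ℝ) (s : ℝ) : ℝ :=
  stInt ν (fun t => G α t s)

noncomputable def Lam (η μ₀ β : ℝ) (ν : MeasureTheory.SignedMeasure ℝ) : ℝ :=
  μ₀ * η + β * stInt ν (fun t => t)

noncomputable def Hker (α η μ₀ β : ℝ) (ν : MeasureTheory.SignedMeasure ℝ) (t s : ℝ) : ℝ :=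
  β * t / (1 - Lam η μ₀ β ν) * gA α ν s
    + μ₀ * t / (1 - Lam η μ₀ β ν) * G α η s + G α t s

noncomputable def Phi (α η μ₀ β : ℝ) (ν : MeasureTheory.SignedMeasure ℝ) (s : ℝ) : ℝ :=
  β / (1 - Lam η μ₀ β ν) * gA α ν s
    + (μ₀ - Lam η μ₀ β ν + 1) / (1 - Lam η μ₀ β ν) * Psi α s

noncomputable def rho (α η t : ℝ) : ℝ := (η - η ^ (α - 1)) * (t - t ^ (α - 1))

noncomputable def tau1 (α η μ₀ β : ℝ) (ν : MeasureTheory.SignedMeasure ℝ) : ℝ :=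
  ∫ s in Icc (0:ℝ) 1, rho α η s * Phi α η μ₀ β ν s

noncomputable def tau2 (α η μ₀ β : ℝ) (ν : MeasureTheory.SignedMeasure ℝ) : ℝ :=
  ∫ s in Icc (0:ℝ) 1, Phi α η μ₀ β ν s

/-! ### Auxiliary lemmas -/

lemma rpow_self_le {p t : ℝ} (hp : 1 ≤ p) (ht0 : 0 ≤ t) (ht1 : t ≤ 1) : t ^ p ≤ t := by
  rcases eq_or_lt_of_le ht0 with h | h
  · rw [← h, Real.zero_rpow (by linarith)]
  · calc t ^ p ≤ t ^ (1:ℝ) := Real.rpow_le_rpow_of_exponent_ge h ht1 hp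
    _ = t := Real.rpow_one t

lemma Psi_nonneg {α s : ℝ} (hα : 0 < α) (hs : s ≤ 1) : 0 ≤ Psi α s :=
  div_nonneg (Real.rpow_nonneg (by linarith) _) (Real.Gamma_pos_of_pos hα).le

lemma Psi_le {α s : ℝ} (hα : 0 < α) (hp : 0 ≤ α - 1) (hs0 : 0 ≤ s) (hs1 : s ≤ 1) :
    Psi α s ≤ 1 / Real.Gamma α := by
  unfold Psi
  rw [div_le_div_iff_of_pos_right (Real.Gamma_pos_of_pos hα)]
  exact Real.rpow_le_one (by linarith) (by linarith) hp

lemma G_lower {α t s : ℝ} (hα : 2 < α) (ht : t ∈ Icc (0:ℝ) 1) (hs : s ∈ Icc (0:ℝ) 1) :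
    (t - t ^ (α - 1)) * Psi α s ≤ G α t s := by
  obtain ⟨ht0, ht1⟩ := ht
  obtain ⟨hs0, hs1⟩ := hs
  have hΓ : 0 < Real.Gamma α := Real.Gamma_pos_of_pos (by linarith)
  unfold G Psi
  split_ifs with h
  · rw [mul_div_assoc' ]
    apply (div_le_div_iff_of_pos_right hΓ).2 ?_ |>.trans_eq rfl
    have key : (t - s) ^ (α - 1) ≤ t ^ (α-1) * (1 - s) ^ (α - 1) := by
      rw [← Real.mul_rpow ht0 (by linarith)]
      exact Real.rpow_le_rpow (by linarith) (by nlinarith) (by linarith)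
    nlinarith [key]
  · rw [mul_div_assoc']
    apply (div_le_div_iff_of_pos_right hΓ).2 ?_
    have : 0 ≤ t ^ (α-1) := Real.rpow_nonneg ht0 _
    nlinarith [Real.rpow_nonneg (show (0:ℝ) ≤ 1 - s by linarith) (α-1)]

lemma G_nonneg {α t s : ℝ} (hα : 2 < α) (ht : t ∈ Icc (0:ℝ) 1) (hs : s ∈ Icc (0:ℝ) 1) :
    0 ≤ G α t s :=
  le_trans (mul_nonneg (by nlinarith [rpow_self_le (show (1:ℝ) ≤ α -1 by linarith) ht.1 ht.2])
    (Psi_nonneg (by linarith) hs.2)) (G_lower hα ht hs)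

lemma G_le {α t s : ℝ} (hα : 2 < α) (ht : t ∈ Icc (0:ℝ) 1) (hs : s ∈ Icc (0:ℝ) 1) :
    |G α t s| ≤ 2 / Real.Gamma α := by
  obtain ⟨ht0, ht1⟩ := ht
  obtain ⟨hs0, hs1⟩ := hs
  have hΓ : 0 < Real.Gamma α := Real.Gamma_pos_of_pos (by linarith)
  have h1 : (1-s) ^ (α-1) ≤ 1 := Real.rpow_le_one (by linarith) (by linarith) (by linarith)
  have h1' : 0 ≤ (1-s) ^ (α-1) := Real.rpow_nonneg (by linarith) _
  unfold G
  split_ifs with h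
  · rw [abs_div, abs_of_pos hΓ, div_le_div_iff_of_pos_right hΓ]
    have h2 : (t-s) ^ (α-1) ≤ 1 := Real.rpow_le_one (by linarith) (by linarith) (by linarith)
    have h2' : 0 ≤ (t-s) ^ (α-1) := Real.rpow_nonneg (by linarith) _
    rw [abs_le]; constructor <;> nlinarith
  · rw [abs_div, abs_of_pos hΓ, div_le_div_iff_of_pos_right hΓ, abs_le]
    constructor <;> nlinarith

lemma G_meas_s {α t : ℝ} : Measurable (fun s => G α t s) := by
  unfold G
  apply Measurable.ite (measurableSet_le measurable_id measurable_const)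
  · exact (((measurable_const.mul ((measurable_const.sub measurable_id).pow_const _)).sub
      ((measurable_const.sub measurable_id).pow_const _)).div measurable_const)
  · exact ((measurable_const.mul ((measurable_const.sub measurable_id).pow_const _)).div
      measurable_const)

lemma G_meas2 {α : ℝ} : Measurable (fun q : ℝ × ℝ => G α q.2 q.1) := by
  unfold G
  apply Measurable.ite (measurableSet_le measurable_fst measurable_snd)
  · exact (((measurable_snd.mul ((measurable_const.sub measurable_fst).pow_const _)).sub
      ((measurable_snd.sub measurable_fst).pow_const _)).div measurable_const)
  · exact ((measurable_snd.mul ((measurable_const.sub measurable_fst).pow_const _)).div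
      measurable_const)

lemma part_meas {α : ℝ} (μ : Measure ℝ) [IsFiniteMeasure μ] :
    Measurable (fun s => ∫ t in Icc (0:ℝ) 1, G α t s ∂μ) :=
  (MeasureTheory.StronglyMeasurable.integral_prod_right
    (f := fun s t => G α t s) (ν := μ.restrict (Icc (0:ℝ) 1))
    (G_meas2.stronglyMeasurable)).measurable

lemma part_bound {α s : ℝ} (hα : 2 < α) (hs : s ∈ Icc (0:ℝ) 1) (μ : Measure ℝ)
    [IsFiniteMeasure μ] :
    |∫ t in Icc (0:ℝ) 1, G α t s ∂μ| ≤ 2 / Real.Gamma α * (μ (Icc (0:ℝ) 1)).toReal := by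
  rw [← Real.norm_eq_abs]
  exact MeasureTheory.norm_setIntegral_le_of_norm_le_const (f := fun t => G α t s)
    (measure_lt_top μ _) (fun t ht => by simpa using G_le hα ht hs)

lemma gA_meas {α : ℝ} (ν : MeasureTheory.SignedMeasure ℝ) :
    Measurable (gA α ν) := by
  unfold gA stInt
  exact (part_meas ν.toJordanDecomposition.posPart).sub (part_meas ν.toJordanDecomposition.negPart)

lemma gA_bound {α : ℝ} (hα : 2 < α) (ν : MeasureTheory.SignedMeasure ℝ) {s : ℝ}
    (hs : s ∈ Icc (0:ℝ) 1) :
    |gA α ν s| ≤ 2 / Real.Gamma α *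
      ((ν.toJordanDecomposition.posPart (Icc (0:ℝ) 1)).toReal
        + (ν.toJordanDecomposition.negPart (Icc (0:ℝ) 1)).toReal) := by
  unfold gA stInt
  calc |_ - _| ≤ |∫ t in Icc (0:ℝ) 1, G α t s ∂ν.toJordanDecomposition.posPart|
      + |∫ t in Icc (0:ℝ) 1, G α t s ∂ν.toJordanDecomposition.negPart| := abs_sub _ _
    _ ≤ _ := by
        rw [mul_add]
        exact add_le_add (part_bound hα hs _) (part_bound hα hs _)

lemma eta_pos {α η : ℝ} (hα : 2 < α) (hη : η ∈ Ioo (0:ℝ) 1) : 0 < η - η ^ (α - 1) := by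
  have : η ^ (α-1) < η ^ (1:ℝ) := Real.rpow_lt_rpow_of_exponent_gt hη.1 hη.2 (by linarith)
  rw [Real.rpow_one] at this; linarith

lemma Hker_key {α η μ₀ β L gs t s : ℝ} (hα : 2 < α) (hη : η ∈ Ioo (0:ℝ) 1)
    (hμ : 0 ≤ μ₀) (hβ : 0 ≤ β) (hL1 : L < 1) (hgs : 0 ≤ gs)
    (ht : t ∈ Icc (0:ℝ) 1) (hs : s ∈ Icc (0:ℝ) 1) :
    (η - η ^ (α - 1)) * (t - t ^ (α - 1)) *
        (β / (1 - L) * gs + (μ₀ - L + 1) / (1 - L) * Psi α s)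
      ≤ β * t / (1 - L) * gs + μ₀ * t / (1 - L) * G α η s + G α t s := by
  have hc : 0 < 1 - L := by linarith
  have hη' : η ∈ Icc (0:ℝ) 1 := ⟨hη.1.le, hη.2.le⟩
  have hcη0 : 0 < η - η ^ (α - 1) := eta_pos hα hη
  have hcη1 : η - η ^ (α - 1) ≤ 1 := by
    have := Real.rpow_nonneg hη.1.le (α - 1); linarith [hη.2.le]
  have het0 : 0 ≤ t - t ^ (α - 1) := by
    linarith [rpow_self_le (show (1:ℝ) ≤ α - 1 by linarith) ht.1 ht.2]
  have het1 : t - t ^ (α - 1) ≤ t := by linarith [Real.rpow_nonneg ht.1 (α - 1)]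
  have hΨ : 0 ≤ Psi α s := Psi_nonneg (by linarith) hs.2
  have hGη := G_lower hα hη' hs
  have hGt := G_lower hα ht hs
  have h1 : (η - η ^ (α - 1)) * (t - t ^ (α - 1)) * (β / (1 - L) * gs)
      ≤ β * t / (1 - L) * gs := by
    have hct : (η - η ^ (α - 1)) * (t - t ^ (α - 1)) ≤ t := by
      nlinarith [mul_nonneg (show (0:ℝ) ≤ 1 - (η - η ^ (α - 1)) by linarith) het0]
    rw [show (η - η ^ (α - 1)) * (t - t ^ (α - 1)) * (β / (1 - L) * gs)
        = (η - η ^ (α - 1)) * (t - t ^ (α - 1)) * (β * gs) / (1 - L) by ring,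
      show β * t / (1 - L) * gs = β * t * gs / (1 - L) by ring,
      div_le_div_iff_of_pos_right hc]
    nlinarith [mul_nonneg hβ hgs, hct]
  have h2 : (η - η ^ (α - 1)) * (t - t ^ (α - 1)) * (μ₀ / (1 - L) * Psi α s)
      ≤ μ₀ * t / (1 - L) * G α η s := by
    rw [show (η - η ^ (α - 1)) * (t - t ^ (α - 1)) * (μ₀ / (1 - L) * Psi α s)
        = (η - η ^ (α - 1)) * (t - t ^ (α - 1)) * (μ₀ * Psi α s) / (1 - L) by ring,
      show μ₀ * t / (1 - L) * G α η s = μ₀ * t * G α η s / (1 - L) by ring,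
      div_le_div_iff_of_pos_right hc]
    calc (η - η ^ (α - 1)) * (t - t ^ (α - 1)) * (μ₀ * Psi α s)
        ≤ (η - η ^ (α - 1)) * t * (μ₀ * Psi α s) := by
          nlinarith [mul_nonneg (mul_nonneg hcη0.le
            (show 0 ≤ t - (t - t ^ (α - 1)) by linarith)) (mul_nonneg hμ hΨ)]
      _ = μ₀ * t * ((η - η ^ (α - 1)) * Psi α s) := by ring
      _ ≤ μ₀ * t * G α η s := by nlinarith [mul_nonneg hμ ht.1, hGη]
  have h3 : (η - η ^ (α - 1)) * (t - t ^ (α - 1)) * Psi α s ≤ G α t s := by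
    calc (η - η ^ (α - 1)) * (t - t ^ (α - 1)) * Psi α s
        ≤ 1 * ((t - t ^ (α - 1)) * Psi α s) := by nlinarith [mul_nonneg het0 hΨ]
      _ ≤ G α t s := by nlinarith
  have expand : (η - η ^ (α - 1)) * (t - t ^ (α - 1)) *
      (β / (1 - L) * gs + (μ₀ - L + 1) / (1 - L) * Psi α s)
      = (η - η ^ (α - 1)) * (t - t ^ (α - 1)) * (β / (1 - L) * gs)
        + (η - η ^ (α - 1)) * (t - t ^ (α - 1)) * (μ₀ / (1 - L) * Psi α s)
        + (η - η ^ (α - 1)) * (t - t ^ (α - 1)) * Psi α s := by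
    have : (μ₀ - L + 1) / (1 - L) = μ₀ / (1 - L) + 1 := by
      field_simp; ring
    rw [this]; ring
  rw [expand]
  exact add_le_add (add_le_add h1 h2) h3

/-- Lemma 2.8, lower bound: the spectral radius (given by Gelfand's formula
`r(K_a) = lim ‖K_aⁿ‖^(1/n)`) of `K_a = a·K` satisfies `r(K_a) ≥ a·τ₁`. -/
theorem spectralRadius_ge (α η μ₀ β : ℝ) (ν : MeasureTheory.SignedMeasure ℝ)
    (hα₁ : 2 < α) (hα₂ : α ≤ 3) (hη : η ∈ Ioo (0:ℝ) 1) (hμ : 0 ≤ μ₀) (hβ : 0 ≤ β)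
    (hΛ₀ : 0 ≤ Lam η μ₀ β ν) (hΛ₁ : Lam η μ₀ β ν < 1)
    (hgA : ∀ s ∈ Icc (0:ℝ) 1, 0 ≤ gA α ν s)
    (K : C(Icc (0:ℝ) 1, ℝ) →L[ℝ] C(Icc (0:ℝ) 1, ℝ))
    (hK : ∀ u : C(Icc (0:ℝ) 1, ℝ), ∀ t : Icc (0:ℝ) 1,
      K u t = ∫ s in Icc (0:ℝ) 1, Hker α η μ₀ β ν t s * u (projIcc 0 1 zero_le_one s))
    (a : ℝ) (ha : 0 < a) (r : ℝ)
    (hr : Tendsto (fun n : ℕ => ‖(a • K) ^ n‖ ^ (1 / (n:ℝ))) atTop (nhds r)) :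
    a * tau1 α η μ₀ β ν ≤ r := by
  have hΓ : 0 < Real.Gamma α := Real.Gamma_pos_of_pos (by linarith)
  have hc : 0 < 1 - Lam η μ₀ β ν := by linarith
  set Λ := Lam η μ₀ β ν with hΛdef
  -- constants
  set Cg : ℝ := 2 / Real.Gamma α *
      ((ν.toJordanDecomposition.posPart (Icc (0:ℝ) 1)).toReal
        + (ν.toJordanDecomposition.negPart (Icc (0:ℝ) 1)).toReal) with hCg
  have hCg0 : 0 ≤ Cg := by
    apply mul_nonneg (by positivity)
    positivity
  -- basic rho facts
  have hrho0 : ∀ t ∈ Icc (0:ℝ) 1, 0 ≤ rho α η t := by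
    intro t ht
    exact mul_nonneg (eta_pos hα₁ hη).le
      (by linarith [rpow_self_le (show (1:ℝ) ≤ α - 1 by linarith) ht.1 ht.2])
  have hrho1 : ∀ t ∈ Icc (0:ℝ) 1, rho α η t ≤ 1 := by
    intro t ht
    have h1 : η - η ^ (α - 1) ≤ 1 := by
      have := Real.rpow_nonneg hη.1.le (α - 1); linarith [hη.2.le]
    have h2 : t - t ^ (α - 1) ≤ 1 := by
      have := Real.rpow_nonneg ht.1 (α - 1); linarith [ht.2]
    have h2' : 0 ≤ t - t ^ (α - 1) := by
      linarith [rpow_self_le (show (1:ℝ) ≤ α - 1 by linarith) ht.1 ht.2]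
    calc rho α η t ≤ 1 * (t - t ^ (α-1)) := by
          unfold rho; nlinarith
      _ ≤ 1 := by linarith
  have hPhi_nonneg : ∀ s ∈ Icc (0:ℝ) 1, 0 ≤ Phi α η μ₀ β ν s := by
    intro s hs
    apply add_nonneg
    · exact mul_nonneg (div_nonneg hβ hc.le) (hgA s hs)
    · exact mul_nonneg (div_nonneg (by linarith) hc.le) (Psi_nonneg (by linarith) hs.2)
  have hPhi_meas : Measurable (Phi α η μ₀ β ν) := by
    apply ((measurable_const.mul (gA_meas ν)).add (measurable_const.mul ?_))
    exact (measurable_const.sub measurable_id).pow_const _ |>.div measurable_const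
  set CΦ : ℝ := β / (1 - Λ) * Cg + (μ₀ - Λ + 1) / (1 - Λ) * (1 / Real.Gamma α) with hCΦ
  have hCΦ0 : 0 ≤ CΦ := by
    apply add_nonneg (mul_nonneg (div_nonneg hβ hc.le) hCg0)
    exact mul_nonneg (div_nonneg (by linarith) hc.le) (by positivity)
  have hPhi_bd : ∀ s ∈ Icc (0:ℝ) 1, |Phi α η μ₀ β ν s| ≤ CΦ := by
    intro s hs
    unfold Phi
    calc |β / (1 - Λ) * gA α ν s + (μ₀ - Λ + 1) / (1 - Λ) * Psi α s|
        ≤ |β / (1 - Λ) * gA α ν s| + |(μ₀ - Λ + 1) / (1 - Λ) * Psi α s| := abs_add_le _ _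
      _ ≤ CΦ := by
          rw [abs_mul, abs_mul, abs_of_nonneg (div_nonneg hβ hc.le),
            abs_of_nonneg (div_nonneg (by linarith : (0:ℝ) ≤ μ₀ - Λ + 1) hc.le),
            abs_of_nonneg (Psi_nonneg (by linarith) hs.2), hCΦ]
          apply add_le_add
          · exact mul_le_mul_of_nonneg_left (gA_bound hα₁ ν hs) (div_nonneg hβ hc.le)
          · exact mul_le_mul_of_nonneg_left (Psi_le (by linarith) (by linarith) hs.1 hs.2)
              (div_nonneg (by linarith) hc.le)
  -- tau1 nonneg
  have hτ0 : 0 ≤ tau1 α η μ₀ β ν :=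
    setIntegral_nonneg measurableSet_Icc
      (fun s hs => mul_nonneg (hrho0 s hs) (hPhi_nonneg s hs))
  -- integrability of rho * Phi
  have hρΦ_int : IntegrableOn (fun s => rho α η s * Phi α η μ₀ β ν s) (Icc (0:ℝ) 1) := by
    apply Integrable.mono' (g := fun _ => CΦ)
      (integrableOn_const (by simp [measure_Icc_lt_top]))
    · apply Measurable.aestronglyMeasurable
      apply Measurable.mul ?_ hPhi_meas
      exact measurable_const.mul (measurable_id.sub (measurable_id.pow_const _))
    · filter_upwards [ae_restrict_mem measurableSet_Icc] with s hs
      rw [Real.norm_eq_abs, abs_mul]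
      calc |rho α η s| * |Phi α η μ₀ β ν s| ≤ 1 * CΦ := by
            apply mul_le_mul _ (hPhi_bd s hs) (abs_nonneg _) zero_le_one
            rw [abs_of_nonneg (hrho0 s hs)]; exact hrho1 s hs
        _ = CΦ := one_mul _
  -- the test function u₀
  have hrho_contR : Continuous (fun t : ℝ => rho α η t) := by
    unfold rho
    apply continuous_const.mul
    apply continuous_id.sub
    rw [continuous_iff_continuousAt]
    exact fun x => Real.continuousAt_rpow_const x _ (Or.inr (by linarith))
  have hrho_cont : Continuous (fun t : Icc (0:ℝ) 1 => rho α η (t : ℝ)) :=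
    hrho_contR.comp continuous_subtype_val
  set u₀ : C(Icc (0:ℝ) 1, ℝ) := ⟨fun t => rho α η (t : ℝ), hrho_cont⟩ with hu₀
  have hu₀norm : ‖u₀‖ ≤ 1 := by
    rw [ContinuousMap.norm_le _ zero_le_one]
    intro x
    have hx : u₀ x = rho α η (x:ℝ) := rfl
    rw [Real.norm_eq_abs, hx, abs_of_nonneg (hrho0 _ x.2)]
    exact hrho1 _ x.2
  -- bounds for Hker
  set CH : ℝ := β / (1 - Λ) * Cg + μ₀ / (1 - Λ) * (2 / Real.Gamma α) + 2 / Real.Gamma α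
    with hCH
  have hgab : ∀ s ∈ Icc (0:ℝ) 1, |gA α ν s| ≤ Cg := fun s hs => hCg ▸ gA_bound hα₁ ν hs
  have hη' : η ∈ Icc (0:ℝ) 1 := ⟨hη.1.le, hη.2.le⟩
  have hHker_bd : ∀ (t : Icc (0:ℝ) 1), ∀ s ∈ Icc (0:ℝ) 1,
      |Hker α η μ₀ β ν (t : ℝ) s| ≤ CH := by
    intro t s hs
    have ht : (t:ℝ) ∈ Icc (0:ℝ) 1 := t.2
    have e1 : |β * t / (1 - Λ)| ≤ β / (1 - Λ) := by
      rw [abs_of_nonneg (div_nonneg (mul_nonneg hβ ht.1) hc.le),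
        div_le_div_iff_of_pos_right hc]
      nlinarith [ht.2]
    have e2 : |μ₀ * t / (1 - Λ)| ≤ μ₀ / (1 - Λ) := by
      rw [abs_of_nonneg (div_nonneg (mul_nonneg hμ ht.1) hc.le),
        div_le_div_iff_of_pos_right hc]
      nlinarith [ht.2]
    unfold Hker
    calc |β * t / (1 - Λ) * gA α ν s + μ₀ * t / (1 - Λ) * G α η s + G α (t:ℝ) s|
        ≤ |β * t / (1 - Λ) * gA α ν s| + |μ₀ * t / (1 - Λ) * G α η s| + |G α (t:ℝ) s| :=
          (abs_add_le _ _).trans (add_le_add_left (abs_add_le _ _) _)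
      _ ≤ CH := by
          rw [abs_mul, abs_mul, hCH]
          exact add_le_add (add_le_add
            (mul_le_mul e1 (hgab s hs) (abs_nonneg _) (div_nonneg hβ hc.le))
            (mul_le_mul e2 (G_le hα₁ hη' hs) (abs_nonneg _) (div_nonneg hμ hc.le)))
            (G_le hα₁ ht hs)
  -- measurability of Hker in s
  have hHker_meas : ∀ t : Icc (0:ℝ) 1, Measurable (fun s => Hker α η μ₀ β ν (t:ℝ) s) := by
    intro t
    unfold Hker
    exact ((measurable_const.mul (gA_meas ν)).add (measurable_const.mul G_meas_s)).add G_meas_s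
  -- integrability of the kernel integrand
  have hbig_int : ∀ (t : Icc (0:ℝ) 1) (v : C(Icc (0:ℝ) 1, ℝ)),
      IntegrableOn (fun s => Hker α η μ₀ β ν (t:ℝ) s * v (projIcc 0 1 zero_le_one s))
        (Icc (0:ℝ) 1) := by
    intro t v
    apply Integrable.mono' (g := fun _ => CH * ‖v‖)
      (integrableOn_const (by simp [measure_Icc_lt_top]))
    · exact ((hHker_meas t).mul
        ((v.continuous.comp continuous_projIcc).measurable)).aestronglyMeasurable
    · filter_upwards [ae_restrict_mem measurableSet_Icc] with s hs
      rw [Real.norm_eq_abs, abs_mul]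
      have hb : |v (projIcc 0 1 zero_le_one s)| ≤ ‖v‖ := by
        rw [← Real.norm_eq_abs]; exact ContinuousMap.norm_coe_le_norm v _
      exact mul_le_mul (hHker_bd t s hs) hb (abs_nonneg _)
        (le_trans (abs_nonneg _) (hHker_bd t s hs))
  -- main induction
  set τ := tau1 α η μ₀ β ν with hτ
  have haτ : 0 ≤ a * τ := mul_nonneg ha.le hτ0
  set A := a • K with hA
  have hA_apply : ∀ (v : C(Icc (0:ℝ) 1, ℝ)) (t : Icc (0:ℝ) 1), A v t = a * K v t :=
    fun v t => rfl
  have key : ∀ n : ℕ, ∀ t : Icc (0:ℝ) 1,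
      (a * τ) ^ n * rho α η (t:ℝ) ≤ (A ^ n) u₀ t := by
    intro n
    induction n with
    | zero =>
      intro t
      rw [pow_zero, pow_zero, one_mul, ContinuousLinearMap.one_apply]
      exact le_of_eq rfl
    | succ n ih =>
      intro t
      have hKn : (A ^ (n+1)) u₀ t = A ((A ^ n) u₀) t := by
        rw [pow_succ']; rfl
      set v : C(Icc (0:ℝ) 1, ℝ) := (A ^ n) u₀ with hv
      rw [hKn, hA_apply, hK]
      have hptw : ∀ s ∈ Icc (0:ℝ) 1,
          ((a * τ) ^ n * rho α η (t:ℝ)) * (rho α η s * Phi α η μ₀ β ν s)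
            ≤ Hker α η μ₀ β ν (t:ℝ) s * v (projIcc 0 1 zero_le_one s) := by
        intro s hs
        have hproj : projIcc 0 1 zero_le_one s = ⟨s, hs⟩ := projIcc_of_mem _ hs
        have hvs : (a * τ) ^ n * rho α η s ≤ v (projIcc 0 1 zero_le_one s) := by
          rw [hproj]; exact ih ⟨s, hs⟩
        have hHk : rho α η (t:ℝ) * Phi α η μ₀ β ν s ≤ Hker α η μ₀ β ν (t:ℝ) s := by
          unfold rho Phi Hker
          exact Hker_key hα₁ hη hμ hβ hΛ₁ (hgA s hs) t.2 hs
        have h0 : 0 ≤ rho α η (t:ℝ) * Phi α η μ₀ β ν s :=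
          mul_nonneg (hrho0 _ t.2) (hPhi_nonneg s hs)
        calc ((a * τ) ^ n * rho α η (t:ℝ)) * (rho α η s * Phi α η μ₀ β ν s)
            = (rho α η (t:ℝ) * Phi α η μ₀ β ν s) * ((a * τ) ^ n * rho α η s) := by
              ring
          _ ≤ Hker α η μ₀ β ν (t:ℝ) s * v (projIcc 0 1 zero_le_one s) :=
              mul_le_mul hHk hvs (mul_nonneg (pow_nonneg haτ n) (hrho0 s hs))
                (le_trans h0 hHk)
      have hlow_int : IntegrableOn
          (fun s => ((a * τ) ^ n * rho α η (t:ℝ)) * (rho α η s * Phi α η μ₀ β ν s))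
          (Icc (0:ℝ) 1) := hρΦ_int.const_mul _
      have hmain : ((a * τ) ^ n * rho α η (t:ℝ)) * τ
          ≤ ∫ s in Icc (0:ℝ) 1,
              Hker α η μ₀ β ν (t:ℝ) s * v (projIcc 0 1 zero_le_one s) := by
        have := setIntegral_mono_on hlow_int (hbig_int t v) measurableSet_Icc hptw
        rwa [MeasureTheory.integral_const_mul] at this
      calc (a * τ) ^ (n+1) * rho α η (t:ℝ)
          = a * (((a * τ) ^ n * rho α η (t:ℝ)) * τ) := by ring
        _ ≤ a * ∫ s in Icc (0:ℝ) 1,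
              Hker α η μ₀ β ν (t:ℝ) s * v (projIcc 0 1 zero_le_one s) :=
            mul_le_mul_of_nonneg_left hmain ha.le
  -- norm estimates
  set tη : Icc (0:ℝ) 1 := ⟨η, hη'⟩ with htη
  set δ : ℝ := rho α η η with hδ
  have hδ0 : 0 < δ := by
    have := eta_pos hα₁ hη
    exact mul_pos this this
  have hnorm : ∀ n : ℕ, (a * τ) ^ n * δ ≤ ‖A ^ n‖ := by
    intro n
    calc (a * τ) ^ n * δ ≤ (A ^ n) u₀ tη := key n tη
      _ ≤ |(A ^ n) u₀ tη| := le_abs_self _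
      _ ≤ ‖(A ^ n) u₀‖ := by
          rw [← Real.norm_eq_abs]; exact ContinuousMap.norm_coe_le_norm _ _
      _ ≤ ‖A ^ n‖ * ‖u₀‖ := ContinuousLinearMap.le_opNorm _ _
      _ ≤ ‖A ^ n‖ * 1 := mul_le_mul_of_nonneg_left hu₀norm (ContinuousLinearMap.opNorm_nonneg _)
      _ = ‖A ^ n‖ := mul_one _
  -- pass to the limit
  have hseq : ∀ n : ℕ, 1 ≤ n →
      (a * τ) * δ ^ (1 / (n:ℝ)) ≤ ‖A ^ n‖ ^ (1 / (n:ℝ)) := by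
    intro n hn
    have hn' : (0:ℝ) < n := by exact_mod_cast hn
    have h1 : ((a * τ) ^ n * δ) ^ (1 / (n:ℝ)) ≤ ‖A ^ n‖ ^ (1 / (n:ℝ)) :=
      Real.rpow_le_rpow (mul_nonneg (pow_nonneg haτ n) hδ0.le) (hnorm n)
        (by positivity)
    calc (a * τ) * δ ^ (1 / (n:ℝ)) = ((a * τ) ^ n * δ) ^ (1 / (n:ℝ)) := by
          rw [Real.mul_rpow (pow_nonneg haτ n) hδ0.le, ← Real.rpow_natCast (a * τ) n,
            ← Real.rpow_mul haτ]
          rw [mul_one_div_cancel (ne_of_gt hn'), Real.rpow_one]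
      _ ≤ _ := h1
  have hlim : Tendsto (fun n : ℕ => (a * τ) * δ ^ (1 / (n:ℝ))) atTop (nhds ((a * τ) * 1)) := by
    apply Tendsto.const_mul
    have hcont : ContinuousAt (fun x : ℝ => δ ^ x) 0 :=
      Real.continuousAt_const_rpow (ne_of_gt hδ0)
    have := hcont.tendsto.comp tendsto_one_div_atTop_nhds_zero_nat
    simpa [Real.rpow_zero, Function.comp_def] using this
  rw [show a * tau1 α η μ₀ β ν = (a * τ) * 1 by rw [hτ, mul_one]]
  exact le_of_tendsto_of_tendsto hlim hr
    (eventually_atTop.2 ⟨1, fun n hn => hseq n hn⟩)
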